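/- Let J : ℝ^d → ℝ and let x* be a global minimizer of J. Let L > 0, μ := max{L, 1}, and let tolerances satisfy 0 ≤ ε̂ and μ ε̂ < ε₂. Let step sizes α_j > 0 satisfy Σ_{j=0}^{∞} α_j = +∞ and Σ_{j=0}^{∞} α_j² < +∞, and let iterates be generated by x^{j+1} := x^j − α_j g_j / max{‖g_j‖, 1}, where each g_j is an ε̂-subgradient of J at x^j with ‖g_j‖ ≤ L. Then there exists a finite index r̄ such that for all r ≥ r̄, min_{0 ≤ k ≤ r} J(x^k) − J(x*) ≤ ε₂. -/

import Mathlib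

open scoped RealInnerProductSpace
open Filter

/-- convergence of the `ε̂`-subgradient method with divergent but
square-summable step sizes: the running best value eventually becomes (and stays)
`ε₂`-close to the optimal value. -/
theorem subgradient_method_converges (d : ℕ) (J : EuclideanSpace ℝ (Fin d) → ℝ)
    (xs : EuclideanSpace ℝ (Fin d)) (hxs : ∀ z, J xs ≤ J z)
    (εhat L ε₂ : ℝ) (hεhat : 0 ≤ εhat) (hL : 0 < L) (hε₂ : max L 1 * εhat < ε₂)
    (α : ℕ → ℝ) (hα : ∀ j, 0 < α j)
    (hdiv : Tendsto (fun r => ∑ j ∈ Finset.range r, α j) atTop atTop)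
    (hsq : Summable fun j => (α j) ^ 2)
    (x g : ℕ → EuclideanSpace ℝ (Fin d))
    (hstep : ∀ j, x (j + 1) = x j - (α j / max ‖g j‖ 1) • g j)
    (hsub : ∀ j, ∀ z : EuclideanSpace ℝ (Fin d), J z ≥ J (x j) + ⟪g j, z - x j⟫ - εhat)
    (hbound : ∀ j, ‖g j‖ ≤ L) :
    ∃ rbar : ℕ, ∀ r ≥ rbar,
      (Finset.range (r + 1)).inf' Finset.nonempty_range_add_one (fun k => J (x k)) - J xs ≤ ε₂ := by
  classical
  set μ := max L 1 with hμdef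
  have hμ1 : (1:ℝ) ≤ μ := le_max_right _ _
  have hμpos : (0:ℝ) < μ := lt_of_lt_of_le one_pos hμ1
  have hε₂pos : 0 < ε₂ := lt_of_le_of_lt (by positivity) hε₂
  set δ := ε₂ / μ - εhat with hδdef
  have hδpos : 0 < δ := by
    have h1 : εhat < ε₂ / μ := (lt_div_iff₀ hμpos).mpr (by linarith [hε₂])
    simp [hδdef]; linarith
  have key : ∃ k, J (x k) - J xs ≤ ε₂ := by
    by_contra h
    push_neg at h
    have step : ∀ j, ‖x (j+1) - xs‖^2 ≤ ‖x j - xs‖^2 - 2 * α j * δ + (α j)^2 := by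
      intro j
      set m := max ‖g j‖ 1 with hm
      have hm1 : (1:ℝ) ≤ m := le_max_right _ _
      have hmpos : (0:ℝ) < m := lt_of_lt_of_le one_pos hm1
      have hmμ : m ≤ μ := max_le_max (hbound j) le_rfl
      set β := α j / m with hβ
      have hβpos : 0 < β := div_pos (hα j) hmpos
      have hgm : ‖g j‖ ≤ m := le_max_left _ _
      have hβg : β * ‖g j‖ ≤ α j := by
        rw [hβ, div_mul_eq_mul_div, div_le_iff₀ hmpos]
        exact mul_le_mul_of_nonneg_left hgm (hα j).le
      have hβμ : α j / μ ≤ β := div_le_div_of_nonneg_left (hα j).le hmpos hmμ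
      have hβα : β ≤ α j := by
        rw [hβ, div_le_iff₀ hmpos]
        nlinarith [hα j]
      have hinner : J (x j) - J xs - εhat ≤ ⟪g j, x j - xs⟫ := by
        have h1 := hsub j xs
        have h2 : ⟪g j, xs - x j⟫ = - ⟪g j, x j - xs⟫ := by
          rw [← inner_neg_right]; congr 1; abel
        rw [h2] at h1
        linarith
      have expand : ‖x (j+1) - xs‖^2
          = ‖x j - xs‖^2 - 2 * β * ⟪g j, x j - xs⟫ + β^2 * ‖g j‖^2 := by
        rw [hstep j]
        have heq : x j - β • g j - xs = (x j - xs) - β • g j := by abel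
        rw [heq, norm_sub_sq_real, real_inner_smul_right, norm_smul,
          real_inner_comm]
        rw [Real.norm_eq_abs, mul_pow, sq_abs]
        ring
      rw [expand]
      have h3 : ε₂ < J (x j) - J xs := h j
      have h4 : β * (J (x j) - J xs - εhat) ≤ β * ⟪g j, x j - xs⟫ :=
        mul_le_mul_of_nonneg_left hinner hβpos.le
      have h5 : α j * δ ≤ β * (J (x j) - J xs - εhat) := by
        have hb1 : (α j / μ) * ε₂ ≤ β * ε₂ :=
          mul_le_mul_of_nonneg_right hβμ hε₂pos.le
        have hb2 : β * εhat ≤ α j * εhat :=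
          mul_le_mul_of_nonneg_right hβα hεhat
        have hb3 : β * ε₂ ≤ β * (J (x j) - J xs) :=
          mul_le_mul_of_nonneg_left h3.le hβpos.le
        have : (α j / μ) * ε₂ = α j * (ε₂ / μ) := by ring
        rw [hδdef]
        nlinarith
      have h6 : β^2 * ‖g j‖^2 ≤ (α j)^2 := by
        have hng : 0 ≤ β * ‖g j‖ := mul_nonneg hβpos.le (norm_nonneg _)
        nlinarith [hα j]
      nlinarith
    set S := ∑' j, (α j)^2 with hS
    have tele : ∀ r, ‖x r - xs‖^2 + 2 * δ * ∑ j ∈ Finset.range r, α j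
        ≤ ‖x 0 - xs‖^2 + ∑ j ∈ Finset.range r, (α j)^2 := by
      intro r
      induction r with
      | zero => simp
      | succ n ih =>
        rw [Finset.sum_range_succ, Finset.sum_range_succ]
        have := step n
        nlinarith
    have hsum_le : ∀ r, ∑ j ∈ Finset.range r, (α j)^2 ≤ S := by
      intro r
      exact Summable.sum_le_tsum _ (fun j _ => sq_nonneg _) hsq
    have hbnd : ∀ r, ∑ j ∈ Finset.range r, α j ≤ (‖x 0 - xs‖^2 + S) / (2 * δ) := by
      intro r
      rw [le_div_iff₀ (by positivity)]
      have := tele r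
      have := hsum_le r
      nlinarith [sq_nonneg ‖x r - xs‖]
    obtain ⟨r, hr⟩ := (hdiv.eventually_gt_atTop ((‖x 0 - xs‖^2 + S) / (2 * δ))).exists
    exact absurd (hbnd r) (not_le.mpr hr)
  obtain ⟨k, hk⟩ := key
  refine ⟨k, fun r hr => ?_⟩
  have hmem : k ∈ Finset.range (r + 1) := Finset.mem_range.mpr (by omega)
  have := Finset.inf'_le (fun k => J (x k)) hmem
  linarith
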